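/- Let Ω ⊂ ℝ^N be a bounded domain, Σ ⊆ closure(Ω) nonempty, and for α ≤ N define, for distinct x, y ∈ closure(Ω), 𝒩_α(x,y) = max{|x-y|, d_Σ(x), d_Σ(y)}^α / (|x-y|^{N-2} · max{|x-y|, d_{∂Ω}(x), d_{∂Ω}(y)}²), where d_{∂Ω} and d_Σ are the distance functions to ∂Ω and Σ. Assume Σ ⊆ ∂Ω so that d_{∂Ω} ≤ d_Σ everywhere. Then there exists a constant C = C(N, α, diam Ω) > 0 such that 1/𝒩_α(x,y) ≤ C (1/𝒩_α(x,z) + 1/𝒩_α(z,y)) for all pairwise distinct x, y, z ∈ closure(Ω). -/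
import Mathlib

noncomputable def Nker (N : ℕ) (α : ℝ)
    (S B : Set (EuclideanSpace ℝ (Fin N))) (x y : EuclideanSpace ℝ (Fin N)) : ℝ :=
  (max (max (dist x y) (Metric.infDist x S)) (Metric.infDist y S)) ^ α /
    (dist x y ^ ((N : ℝ) - 2) *
      (max (max (dist x y) (Metric.infDist x B)) (Metric.infDist y B)) ^ (2 : ℝ))

open Real in

lemma Nker_core (n α a b Bxy Bxz Sxy Sxz : ℝ) (hn : 3 ≤ n) (hα : α ≤ n)
    (ha : 0 < a) (hb : 0 < b) (hBxz : 0 < Bxz) (hSxy : 0 < Sxy) (hSxz : 0 < Sxz)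
    (hBxy0 : 0 ≤ Bxy)
    (hab : a ≤ 2 * b) (hB2 : Bxy ≤ 2 * Bxz) (hS2 : Sxy ≤ 2 * Sxz)
    (hSzx : Sxz ≤ Sxy + b) (haS : a ≤ Sxy) (hBS : Bxy ≤ Sxy) (hbB : b ≤ Bxz) :
    a ^ (n - 2) * Bxy ^ (2:ℝ) * Sxz ^ α ≤
      ((2:ℝ) ^ (2 * n) + (2:ℝ) ^ (n - α)) * (b ^ (n - 2) * Bxz ^ (2:ℝ)) * Sxy ^ α := by
  have he : (0:ℝ) ≤ n - 2 := by linarith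
  have hK2 : (0:ℝ) < (2:ℝ) ^ (n - α) := rpow_pos_of_pos two_pos _
  have hK1 : (0:ℝ) < (2:ℝ) ^ (2 * n) := rpow_pos_of_pos two_pos _
  have hQ : (0:ℝ) ≤ b ^ (n - 2) * Bxz ^ (2:ℝ) := by positivity
  have hP : (0:ℝ) ≤ Sxy ^ α := rpow_nonneg hSxy.le _
  have h1 : a ^ (n - 2) ≤ (2:ℝ) ^ (n - 2) * b ^ (n - 2) := by
    rw [← mul_rpow (by norm_num) hb.le]
    exact rpow_le_rpow ha.le hab he
  rcases le_or_gt α 0 with hα0 | hα0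
  · -- α ≤ 0
    have h2 : Bxy ^ (2:ℝ) ≤ (2:ℝ) ^ (2:ℝ) * Bxz ^ (2:ℝ) := by
      rw [← mul_rpow (by norm_num) hBxz.le]
      exact rpow_le_rpow hBxy0 hB2 (by norm_num)
    have h3 : Sxz ^ α ≤ (2:ℝ) ^ (-α) * Sxy ^ α := by
      have hh : Sxy * 2⁻¹ ≤ Sxz := by linarith
      calc Sxz ^ α ≤ (Sxy * 2⁻¹) ^ α :=
            rpow_le_rpow_of_nonpos (by positivity) hh hα0
        _ = (2:ℝ) ^ (-α) * Sxy ^ α := by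
            rw [mul_rpow hSxy.le (by norm_num), inv_rpow (by norm_num), ← rpow_neg (by norm_num)]
            ring
    calc a ^ (n - 2) * Bxy ^ (2:ℝ) * Sxz ^ α
        ≤ ((2:ℝ) ^ (n-2) * b ^ (n-2)) * ((2:ℝ) ^ (2:ℝ) * Bxz ^ (2:ℝ)) *
            ((2:ℝ) ^ (-α) * Sxy ^ α) := by
          apply mul_le_mul (mul_le_mul h1 h2 (by positivity) (by positivity)) h3
            (by positivity) (by positivity)
      _ = ((2:ℝ) ^ (n-2) * (2:ℝ) ^ (2:ℝ) * (2:ℝ) ^ (-α)) * (b ^ (n-2) * Bxz ^ (2:ℝ)) *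
            Sxy ^ α := by ring
      _ ≤ ((2:ℝ) ^ (2 * n) + (2:ℝ) ^ (n - α)) * (b ^ (n-2) * Bxz ^ (2:ℝ)) * Sxy ^ α := by
          apply mul_le_mul_of_nonneg_right (mul_le_mul_of_nonneg_right ?_ hQ) hP
          rw [← rpow_add two_pos, ← rpow_add two_pos]
          have : n - 2 + 2 + -α = n - α := by ring
          rw [this]
          exact le_add_of_nonneg_left hK1.le
  · rcases le_or_gt b Sxy with hcase | hcase
    · -- b ≤ Sxy
      have h2 : Bxy ^ (2:ℝ) ≤ (2:ℝ) ^ (2:ℝ) * Bxz ^ (2:ℝ) := by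
        rw [← mul_rpow (by norm_num) hBxz.le]
        exact rpow_le_rpow hBxy0 hB2 (by norm_num)
      have h3 : Sxz ^ α ≤ (2:ℝ) ^ α * Sxy ^ α := by
        rw [← mul_rpow (by norm_num) hSxy.le]
        exact rpow_le_rpow hSxz.le (by linarith) hα0.le
      calc a ^ (n - 2) * Bxy ^ (2:ℝ) * Sxz ^ α
          ≤ ((2:ℝ) ^ (n-2) * b ^ (n-2)) * ((2:ℝ) ^ (2:ℝ) * Bxz ^ (2:ℝ)) *
              ((2:ℝ) ^ α * Sxy ^ α) := by
            apply mul_le_mul (mul_le_mul h1 h2 (by positivity) (by positivity)) h3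
              (by positivity) (by positivity)
        _ = ((2:ℝ) ^ (n-2) * (2:ℝ) ^ (2:ℝ) * (2:ℝ) ^ α) * (b ^ (n-2) * Bxz ^ (2:ℝ)) *
              Sxy ^ α := by ring
        _ ≤ ((2:ℝ) ^ (2 * n) + (2:ℝ) ^ (n - α)) * (b ^ (n-2) * Bxz ^ (2:ℝ)) * Sxy ^ α := by
            apply mul_le_mul_of_nonneg_right (mul_le_mul_of_nonneg_right ?_ hQ) hP
            rw [← rpow_add two_pos, ← rpow_add two_pos]
            have h4 : (2:ℝ) ^ (n - 2 + 2 + α) ≤ (2:ℝ) ^ (2 * n) :=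
              rpow_le_rpow_of_exponent_le one_le_two (by linarith)
            linarith
    · -- Sxy < b
      have h3 : Sxz ^ α ≤ (2:ℝ) ^ α * b ^ α := by
        rw [← mul_rpow (by norm_num) hb.le]
        exact rpow_le_rpow hSxz.le (by linarith) hα0.le
      have h1' : a ^ (n-2) ≤ Sxy ^ (n-2) := rpow_le_rpow ha.le haS he
      have h2' : Bxy ^ (2:ℝ) ≤ Sxy ^ (2:ℝ) := rpow_le_rpow hBxy0 hBS (by norm_num)
      have key : Sxy ^ (n-2) * Sxy ^ (2:ℝ) * b ^ α ≤ b ^ (n-2) * Bxz ^ (2:ℝ) * Sxy ^ α := by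
        have e1 : Sxy ^ (n-2) * Sxy ^ (2:ℝ) = Sxy ^ (n - α) * Sxy ^ α := by
          rw [← rpow_add hSxy, ← rpow_add hSxy]; ring_nf
        have e2 : Sxy ^ (n - α) ≤ b ^ (n - α) :=
          rpow_le_rpow hSxy.le hcase.le (by linarith)
        have e3 : b ^ (n - α) * b ^ α = b ^ (n-2) * b ^ (2:ℝ) := by
          rw [← rpow_add hb, ← rpow_add hb]; ring_nf
        have e4 : b ^ (2:ℝ) ≤ Bxz ^ (2:ℝ) := rpow_le_rpow hb.le hbB (by norm_num)
        calc Sxy ^ (n-2) * Sxy ^ (2:ℝ) * b ^ α = Sxy ^ (n-α) * b ^ α * Sxy ^ α := by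
              rw [e1]; ring
          _ ≤ b ^ (n-α) * b ^ α * Sxy ^ α := by
              apply mul_le_mul_of_nonneg_right (mul_le_mul_of_nonneg_right e2 (by positivity)) hP
          _ = b ^ (n-2) * b ^ (2:ℝ) * Sxy ^ α := by rw [e3]
          _ ≤ b ^ (n-2) * Bxz ^ (2:ℝ) * Sxy ^ α := by
              apply mul_le_mul_of_nonneg_right (mul_le_mul_of_nonneg_left e4 (by positivity)) hP
      have hc : (2:ℝ) ^ α ≤ (2:ℝ) ^ (2*n) :=
        rpow_le_rpow_of_exponent_le one_le_two (by linarith)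
      calc a ^ (n - 2) * Bxy ^ (2:ℝ) * Sxz ^ α
          ≤ (Sxy ^ (n-2) * Sxy ^ (2:ℝ)) * ((2:ℝ) ^ α * b ^ α) := by
            apply mul_le_mul (mul_le_mul h1' h2' (by positivity) (by positivity)) h3
              (by positivity) (by positivity)
        _ = (2:ℝ) ^ α * (Sxy ^ (n-2) * Sxy ^ (2:ℝ) * b ^ α) := by ring
        _ ≤ (2:ℝ) ^ (2*n) * (b ^ (n-2) * Bxz ^ (2:ℝ) * Sxy ^ α) := by
            apply mul_le_mul hc key (by positivity) (by positivity)
        _ ≤ ((2:ℝ) ^ (2 * n) + (2:ℝ) ^ (n - α)) * (b ^ (n-2) * Bxz ^ (2:ℝ)) * Sxy ^ α := by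
            have e5 : (2:ℝ)^(2*n) * (b^(n-2)*Bxz^(2:ℝ)*Sxy^α) =
                ((2:ℝ)^(2*n)) * (b^(n-2)*Bxz^(2:ℝ)) * Sxy^α := by ring
            rw [e5]
            exact mul_le_mul_of_nonneg_right
              (mul_le_mul_of_nonneg_right (le_add_of_nonneg_right hK2.le) hQ) hP
lemma Nker_symm (N : ℕ) (α : ℝ) (S B : Set (EuclideanSpace ℝ (Fin N)))
    (x y : EuclideanSpace ℝ (Fin N)) : Nker N α S B x y = Nker N α S B y x := by
  unfold Nker
  rw [dist_comm x y, sup_right_comm (dist y x) (Metric.infDist x S),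
    sup_right_comm (dist y x) (Metric.infDist x B)]

lemma Nker_aux (N : ℕ) (hN : 3 ≤ N) (α : ℝ) (hα : α ≤ (N : ℝ))
    (S B : Set (EuclideanSpace ℝ (Fin N)))
    (hBS : ∀ w, Metric.infDist w B ≤ Metric.infDist w S)
    (x y z : EuclideanSpace ℝ (Fin N)) (hxy : x ≠ y) (hxz : x ≠ z)
    (hzy : dist z y ≤ dist x z) :
    1 / Nker N α S B x y ≤
      ((2:ℝ) ^ (2 * (N:ℝ)) + (2:ℝ) ^ ((N:ℝ) - α)) * (1 / Nker N α S B x z) := by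
  have ha : 0 < dist x y := dist_pos.2 hxy
  have hb : 0 < dist x z := dist_pos.2 hxz
  set a := dist x y
  set b := dist x z
  set sx := Metric.infDist x S
  set sy := Metric.infDist y S
  set sz := Metric.infDist z S
  set bx := Metric.infDist x B
  set bY := Metric.infDist y B
  set bz := Metric.infDist z B
  have hsx : 0 ≤ sx := Metric.infDist_nonneg
  have hsy : 0 ≤ sy := Metric.infDist_nonneg
  have hsz : 0 ≤ sz := Metric.infDist_nonneg
  have hbx : 0 ≤ bx := Metric.infDist_nonneg
  have hbY : 0 ≤ bY := Metric.infDist_nonneg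
  have hbz : 0 ≤ bz := Metric.infDist_nonneg
  set Sxy := max (max a sx) sy with hSxydef
  set Sxz := max (max b sx) sz with hSxzdef
  set Bxy := max (max a bx) bY with hBxydef
  set Bxz := max (max b bx) bz with hBxzdef
  have hSxy : 0 < Sxy := lt_of_lt_of_le ha (le_max_of_le_left (le_max_left _ _))
  have hSxz : 0 < Sxz := lt_of_lt_of_le hb (le_max_of_le_left (le_max_left _ _))
  have hBxy : 0 < Bxy := lt_of_lt_of_le ha (le_max_of_le_left (le_max_left _ _))
  have hBxz : 0 < Bxz := lt_of_lt_of_le hb (le_max_of_le_left (le_max_left _ _))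
  have hab : a ≤ 2 * b := by
    have := dist_triangle x z y
    simpa [a, b] using by linarith [dist_triangle x z y]
  -- triangle inequalities for infDist
  have hsyz : sy ≤ sz + dist z y := by
    have := Metric.infDist_le_infDist_add_dist (x := y) (y := z) (s := S)
    rwa [dist_comm y z] at this
  have hbyz : bY ≤ bz + dist z y := by
    have := Metric.infDist_le_infDist_add_dist (x := y) (y := z) (s := B)
    rwa [dist_comm y z] at this
  have hszy : sz ≤ sy + dist z y := Metric.infDist_le_infDist_add_dist
  -- component bounds
  have hbSxz : b ≤ Sxz := le_max_of_le_left (le_max_left _ _)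
  have hsxSxz : sx ≤ Sxz := le_max_of_le_left (le_max_right _ _)
  have hszSxz : sz ≤ Sxz := le_max_right _ _
  have hbBxz : b ≤ Bxz := le_max_of_le_left (le_max_left _ _)
  have hbxBxz : bx ≤ Bxz := le_max_of_le_left (le_max_right _ _)
  have hbzBxz : bz ≤ Bxz := le_max_right _ _
  have haSxy : a ≤ Sxy := le_max_of_le_left (le_max_left _ _)
  have hsxSxy : sx ≤ Sxy := le_max_of_le_left (le_max_right _ _)
  have hsySxy : sy ≤ Sxy := le_max_right _ _
  have hS2 : Sxy ≤ 2 * Sxz := by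
    apply max_le (max_le (by linarith) (by linarith)) (by linarith)
  have hB2 : Bxy ≤ 2 * Bxz := by
    apply max_le (max_le (by linarith) (by linarith)) (by linarith)
  have hSzx : Sxz ≤ Sxy + b := by
    apply max_le (max_le (by linarith) (by linarith)) (by linarith)
  have hBS' : Bxy ≤ Sxy := by
    apply max_le (max_le haSxy (le_trans (hBS x) hsxSxy)) (le_trans (hBS y) hsySxy)
  have key := Nker_core (N : ℝ) α a b Bxy Bxz Sxy Sxz
    (by exact_mod_cast hN) hα ha hb hBxz hSxy hSxz hBxy.le
    hab hB2 hS2 hSzx haSxy hBS' hbBxz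
  unfold Nker
  rw [one_div_div, one_div_div, ← mul_div_assoc,
    div_le_div_iff₀ (Real.rpow_pos_of_pos hSxy _) (Real.rpow_pos_of_pos hSxz _)]
  exact key
theorem Nker_quasi_metric (N : ℕ) (hN : 3 ≤ N) (α : ℝ) (hα : α ≤ (N : ℝ))
    (Ω S : Set (EuclideanSpace ℝ (Fin N)))
    (hΩopen : IsOpen Ω) (hΩbd : Bornology.IsBounded Ω) (hΩne : Ω.Nonempty)
    (hSne : S.Nonempty) (hSsub : S ⊆ frontier Ω) :
    ∃ C > 0, ∀ x ∈ closure Ω, ∀ y ∈ closure Ω, ∀ z ∈ closure Ω,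
      x ≠ y → x ≠ z → y ≠ z →
      1 / Nker N α S (frontier Ω) x y ≤
        C * (1 / Nker N α S (frontier Ω) x z + 1 / Nker N α S (frontier Ω) z y) := by
  set B := frontier Ω
  have hBS : ∀ w, Metric.infDist w B ≤ Metric.infDist w S := fun w =>
    Metric.infDist_le_infDist_of_subset hSsub hSne
  set C : ℝ := (2:ℝ) ^ (2 * (N:ℝ)) + (2:ℝ) ^ ((N:ℝ) - α) with hC
  have hCpos : 0 < C := by positivity
  refine ⟨C, hCpos, fun x _ y _ z _ hxy hxz hyz => ?_⟩
  have hnn : ∀ u v : EuclideanSpace ℝ (Fin N), 0 ≤ 1 / Nker N α S B u v := by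
    intro u v
    have : 0 ≤ Nker N α S B u v := by
      unfold Nker
      positivity
    positivity
  rcases le_total (dist z y) (dist x z) with h | h
  · have := Nker_aux N hN α hα S B hBS x y z hxy hxz h
    calc 1 / Nker N α S B x y ≤ C * (1 / Nker N α S B x z) := this
      _ ≤ C * (1 / Nker N α S B x z + 1 / Nker N α S B z y) := by
          have := hnn z y
          nlinarith
  · have h' : dist z x ≤ dist y z := by rw [dist_comm z x, dist_comm y z]; exact h
    have := Nker_aux N hN α hα S B hBS y x z (Ne.symm hxy) hyz h'
    rw [Nker_symm N α S B y x, Nker_symm N α S B y z] at this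
    calc 1 / Nker N α S B x y ≤ C * (1 / Nker N α S B z y) := this
      _ ≤ C * (1 / Nker N α S B x z + 1 / Nker N α S B z y) := by
          have := hnn x z
          nlinarith
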